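/- Let α ∈ (0, π) with α/π irrational. If f : ℝ → ℝ is continuous and 2π-periodic and ∫_c^{c+2α} f(x) dx = 0 for all c ∈ ℝ, then f = 0. -/

import Mathlib

open Real intervalIntegral

theorem arc_pompeiu_irrational (α : ℝ) (hα : α ∈ Set.Ioo 0 π)
    (hirr : Irrational (α / π)) (f : ℝ → ℝ) (hf : Continuous f)
    (hper : Function.Periodic f (2 * π))
    (hint : ∀ c : ℝ, ∫ x in c..(c + 2 * α), f x = 0) :
    f = 0 := by
  obtain ⟨hα0, hαπ⟩ := hα
  -- antiderivative
  set F : ℝ → ℝ := fun x => ∫ t in (0:ℝ)..x, f t with hF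
  have hFd : ∀ x : ℝ, HasDerivAt F (f x) x := fun x =>
    intervalIntegral.integral_hasDerivAt_right (hf.intervalIntegrable (μ := MeasureTheory.volume) 0 x)
      (hf.stronglyMeasurable.stronglyMeasurableAtFilter (μ := MeasureTheory.volume) (l := nhds x)) hf.continuousAt
  -- f is 2α-periodic
  have hper2 : Function.Periodic f (2 * α) := by
    intro x
    have hG : ∀ y : ℝ, F (y + 2 * α) - F y = 0 := by
      intro y
      have := intervalIntegral.integral_add_adjacent_intervals
        (hf.intervalIntegrable (μ := MeasureTheory.volume) 0 y) (hf.intervalIntegrable (μ := MeasureTheory.volume) y (y + 2 * α))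
      rw [hint y] at this
      simp [hF] at this ⊢
      linarith [this]
    have h1 : HasDerivAt (fun y => F (y + 2 * α) - F y) (f (x + 2 * α) - f x) x := by
      have := ((hFd (x + 2 * α)).comp x ((hasDerivAt_id x).add_const (2 * α)))
      have h := this.sub (hFd x); rw [mul_one] at h; exact h
    have h2 : HasDerivAt (fun y => F (y + 2 * α) - F y) 0 x := by
      have : (fun y => F (y + 2 * α) - F y) = fun _ => (0:ℝ) := funext hG
      rw [this]; exact hasDerivAt_const x 0
    have := h1.unique h2
    linarith [this]
  -- periods subgroup
  let P : AddSubgroup ℝ :=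
    { carrier := {p | Function.Periodic f p}
      zero_mem' := fun x => by simp
      add_mem' := fun ha hb => ha.add_period hb
      neg_mem' := fun ha => ha.neg }
  have h2α : (2 * α : ℝ) ∈ P := hper2
  have h2π : (2 * π : ℝ) ∈ P := hper
  -- P is dense: otherwise cyclic, contradicting irrationality
  have hdense : Dense (P : Set ℝ) := by
    rcases P.dense_or_cyclic with h | ⟨a, ha⟩
    · exact h
    · exfalso
      rw [ha, AddSubgroup.mem_closure_singleton] at h2α h2π
      obtain ⟨n, hn⟩ := h2α
      obtain ⟨m, hm⟩ := h2π
      rw [zsmul_eq_mul] at hn hm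
      have hπ0 : (π : ℝ) ≠ 0 := pi_ne_zero
      have hm0 : (m : ℝ) ≠ 0 := by
        intro h0
        rw [h0, zero_mul] at hm
        exact (by positivity : (0:ℝ) < 2 * π).ne hm
      have ha0 : a ≠ 0 := by
        intro h0; rw [h0, mul_zero] at hm
        exact (by positivity : (0:ℝ) < 2 * π).ne hm
      apply hirr
      refine ⟨(n : ℚ) / (m : ℚ), ?_⟩
      have hmQ : ((m : ℚ) : ℝ) ≠ 0 := by exact_mod_cast hm0
      push_cast
      rw [div_eq_div_iff (by exact_mod_cast hm0) hπ0]
      linear_combination ((n : ℝ) * hm - (m : ℝ) * hn) / (-2)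
  -- f is constant
  have hconst : ∀ x : ℝ, f x = f 0 := by
    intro x
    have hx : x ∈ closure (P : Set ℝ) := hdense x
    rcases mem_closure_iff_seq_limit.1 hx with ⟨u, hu, hlim⟩
    have h1 : Filter.Tendsto (fun n => f (x - u n)) Filter.atTop (nhds (f 0)) := by
      have : Filter.Tendsto (fun n => x - u n) Filter.atTop (nhds 0) := by
        have h := Filter.Tendsto.sub (tendsto_const_nhds (x := x)) hlim
        simpa using h
      exact (hf.continuousAt.tendsto.comp this)
    have h2 : ∀ n, f (x - u n) = f x := fun n => (hu n).sub_eq x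
    simp only [h2] at h1
    exact tendsto_nhds_unique tendsto_const_nhds h1
  -- constant must be 0
  have h0 : f 0 = 0 := by
    have := hint 0
    rw [show (0:ℝ) + 2 * α = 2 * α by ring] at this
    have heq : ∀ x ∈ Set.uIcc (0:ℝ) (2*α), f x = f 0 := fun x _ => hconst x
    rw [intervalIntegral.integral_congr heq, intervalIntegral.integral_const] at this
    simp at this
    rcases this with h | h
    · linarith
    · exact h
  funext x
  rw [hconst x, h0]; rfl
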